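/- arXiv:2503.24208 — 2 statements merged into one kernel-verified Lean document; each statement's English description precedes it below -/
import Mathlib

section
/- Let ω : ℝ³ × ℝ³ → ℝ^{3×3} be a smooth matrix-valued kernel satisfying the exchange symmetry ω(v,v') = ω(v',v), with each ω(v,v') a symmetric matrix satisfying ω(v,v')(v − v') = 0, and let f : ℝ³ → ℝ be smooth and compactly supported. Then the total kinetic energy is conserved by the collision operator: ∫_{ℝ³} |v|² · C_ω[f](v) dv = 0. -/
open MeasureTheory Matrix
open scoped RealInnerProductSpace ContDiff

noncomputable section

/-- ℝ³ as three-dimensional Euclidean space. -/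
abbrev E3 : Type := EuclideanSpace ℝ (Fin 3)

/-- A 3×3 matrix acting on a Euclidean vector. -/
def matVec (M : Matrix (Fin 3) (Fin 3) ℝ) (x : E3) : E3 :=
  (EuclideanSpace.equiv (Fin 3) ℝ).symm (M.mulVec (EuclideanSpace.equiv (Fin 3) ℝ x))

/-- Divergence of a vector field on ℝ³. -/
def div3 (F : E3 → E3) (v : E3) : ℝ :=
  ∑ i : Fin 3, fderiv ℝ F v (EuclideanSpace.single i 1) i

/-- The integrand Ω(v,v') (f(v') ∇f(v) − f(v) ∇f(v')) of the collision operator. -/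
def collKer (Ω : E3 → E3 → Matrix (Fin 3) (Fin 3) ℝ) (f : E3 → ℝ) (v v' : E3) : E3 :=
  matVec (Ω v v') (f v' • gradient f v - f v • gradient f v')

/-- The collision operator C_Ω[f](v) = div_v ∫ Ω(v,v')(f(v')∇f(v) − f(v)∇f(v')) dv'. -/
def collOp (Ω : E3 → E3 → Matrix (Fin 3) (Fin 3) ℝ) (f : E3 → ℝ) (v : E3) : ℝ :=
  div3 (fun w => ∫ v', collKer Ω f w v') v

open Function

section helpers2



variable {f : E3 → ℝ}

lemma grad_contDiff (hf : ContDiff ℝ ∞ f) : ContDiff ℝ ∞ (fun v => gradient f v) := by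
  have h1 : ContDiff ℝ ∞ (fderiv ℝ f) := hf.fderiv_right (by simp)
  exact ((InnerProductSpace.toDual ℝ E3).symm.contDiff).comp h1

lemma grad_zero_of_nmem (v : E3) (hv : v ∉ tsupport f) : gradient f v = 0 := by
  have : fderiv ℝ f v = 0 := by
    by_contra h
    exact hv (tsupport_fderiv_subset ℝ (subset_tsupport _ (by simpa using h)))
  show (InnerProductSpace.toDual ℝ E3).symm (fderiv ℝ f v) = 0
  simp [this]

lemma matVec_contDiff {X : Type*} [NormedAddCommGroup X] [NormedSpace ℝ X]
    {M : X → Matrix (Fin 3) (Fin 3) ℝ} {u : X → E3}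
    (hM : ∀ i j, ContDiff ℝ ∞ fun x => M x i j) (hu : ContDiff ℝ ∞ u) :
    ContDiff ℝ ∞ (fun x => matVec (M x) (u x)) := by
  have : ContDiff ℝ ∞ (fun x => (M x).mulVec (fun j => u x j)) := by
    apply contDiff_pi.mpr
    intro i
    simp only [Matrix.mulVec, dotProduct]
    exact ContDiff.sum fun j _ => (hM i j).mul
      ((EuclideanSpace.proj j : E3 →L[ℝ] ℝ).contDiff.comp hu)
  exact ((EuclideanSpace.equiv (Fin 3) ℝ).symm : (Fin 3 → ℝ) →L[ℝ] E3).contDiff.comp this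

lemma matVec_zero (M : Matrix (Fin 3) (Fin 3) ℝ) : matVec M 0 = 0 := by
  simp [matVec]

lemma matVec_neg (M : Matrix (Fin 3) (Fin 3) ℝ) (x : E3) : matVec M (-x) = - matVec M x := by
  simp only [matVec, map_neg, Matrix.mulVec_neg]

lemma matVec_apply (M : Matrix (Fin 3) (Fin 3) ℝ) (x : E3) (i : Fin 3) :
    matVec M x i = M.mulVec (fun j => x j) i := rfl

lemma key_null (M : Matrix (Fin 3) (Fin 3) ℝ) (hM : Mᵀ = M) (x y : E3) (hx : matVec M x = 0) :
    ∑ i, x i * (matVec M y i) = 0 := by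
  have hx' : M.mulVec (fun j => x j) = 0 := by
    have := congrArg (EuclideanSpace.equiv (Fin 3) ℝ) hx
    simp [matVec] at this; exact this
  have hvm : Matrix.vecMul (fun j => x j) M = 0 := by
    rw [← Matrix.mulVec_transpose, hM, hx']
  calc ∑ i, x i * (matVec M y i) = (fun j => x j) ⬝ᵥ M.mulVec (fun j => y j) := by
        simp [matVec_apply, dotProduct]
    _ = Matrix.vecMul (fun j => x j) M ⬝ᵥ (fun j => y j) := by rw [Matrix.dotProduct_mulVec]
    _ = 0 := by rw [hvm]; simp

end helpers2

set_option maxHeartbeats 1000000 in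
/-- conservation of kinetic energy by the collision operator. -/
theorem energy_conservation
    (Ω : E3 → E3 → Matrix (Fin 3) (Fin 3) ℝ)
    (hΩ : ∀ i j, ContDiff ℝ ∞ fun p : E3 × E3 => Ω p.1 p.2 i j)
    (hexch : ∀ v v', Ω v v' = Ω v' v)
    (hsymm : ∀ v v', (Ω v v')ᵀ = Ω v v')
    (hnull : ∀ v v', matVec (Ω v v') (v - v') = 0)
    (f : E3 → ℝ) (hf : ContDiff ℝ ∞ f) (hfc : HasCompactSupport f) :
    ∫ v, ‖v‖ ^ 2 * collOp Ω f v = 0 := by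
  classical
  set κ : Set E3 := tsupport f with hκdef
  have hκ : IsCompact κ := hfc
  have hgsm : ContDiff ℝ ∞ (fun v => gradient f v) := grad_contDiff hf
  have hf0 : ∀ v, v ∉ κ → f v = 0 := fun v hv => image_eq_zero_of_notMem_tsupport hv
  have hg0 : ∀ v, v ∉ κ → gradient f v = 0 := fun v hv => grad_zero_of_nmem v hv
  set K : E3 → E3 → E3 := collKer Ω f with hKdef
  have hKeq : ∀ v v', K v v' = matVec (Ω v v') (f v' • gradient f v - f v • gradient f v') :=
    fun _ _ => rfl
  have hKsm : ContDiff ℝ ∞ (fun p : E3 × E3 => K p.1 p.2) := by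
    apply matVec_contDiff hΩ
    exact ((hf.comp contDiff_snd).smul (hgsm.comp contDiff_fst)).sub
      ((hf.comp contDiff_fst).smul (hgsm.comp contDiff_snd))
  have hK0 : ∀ v v', (v ∉ κ ∨ v' ∉ κ) → K v v' = 0 := by
    intro v v' h
    rcases h with h | h
    · rw [hKeq, hf0 v h, hg0 v h]; simp [matVec_zero]
    · rw [hKeq, hf0 v' h, hg0 v' h]; simp [matVec_zero]
  have hKcont : Continuous (uncurry K) := hKsm.continuous
  have hKint : ∀ v, Integrable (fun v' => K v v') := by
    intro v
    apply Continuous.integrable_of_hasCompactSupport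
    · exact hKcont.comp (continuous_const.prodMk continuous_id)
    · exact HasCompactSupport.intro hκ (fun v' hv' => hK0 v v' (Or.inr hv'))
  set d1K : E3 × E3 → E3 →L[ℝ] E3 := fun p => fderiv ℝ (fun w => K w p.2) p.1 with hd1Kdef
  have hd1Ksm : ContDiff ℝ ∞ d1K := by
    have h1 : ContDiff ℝ ∞ (Function.uncurry fun (p : E3 × E3) (w : E3) => K w p.2) :=
      hKsm.comp (contDiff_snd.prodMk (contDiff_snd.comp contDiff_fst))
    exact h1.fderiv contDiff_fst (by simp)
  have hd1Kcont : Continuous d1K := hd1Ksm.continuous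
  have hd1K0 : ∀ (p : E3 × E3), (p.1 ∉ κ ∨ p.2 ∉ κ) → d1K p = 0 := by
    rintro ⟨v, v'⟩ (h | h)
    · show fderiv ℝ (fun w => K w v') v = 0
      have heq : (fun w => K w v') =ᶠ[nhds v] (fun _ => (0:E3)) := by
        filter_upwards [hκ.isClosed.isOpen_compl.mem_nhds h] with w hw
        exact hK0 w v' (Or.inl hw)
      rw [heq.fderiv_eq]
      exact fderiv_const_apply 0
    · show fderiv ℝ (fun w => K w v') v = 0
      have heq : (fun w => K w v') = fun _ => (0:E3) := funext fun w => hK0 w v' (Or.inr h)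
      rw [heq]
      exact fderiv_const_apply 0
  set G : E3 → E3 := fun v => ∫ v', K v v' with hGdef
  set G' : E3 → E3 →L[ℝ] E3 := fun v => ∫ v', d1K (v, v') with hG'def
  have hG : ∀ v₀, HasFDerivAt G (G' v₀) v₀ := by
    intro v₀
    obtain ⟨M, hM⟩ : ∃ M, ∀ p ∈ Metric.closedBall v₀ 1 ×ˢ κ, ‖d1K p‖ ≤ M :=
      ((isCompact_closedBall v₀ 1).prod hκ).exists_bound_of_continuousOn hd1Kcont.continuousOn
    rw [hGdef, hG'def]
    apply hasFDerivAt_integral_of_dominated_of_fderiv_le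
      (F' := fun x a => d1K (x, a)) (bound := κ.indicator fun _ => max M 0) (Metric.ball_mem_nhds v₀ one_pos)
    · exact Filter.Eventually.of_forall fun x =>
        (hKcont.comp (continuous_const.prodMk continuous_id)).aestronglyMeasurable
    · exact hKint v₀
    · exact (hd1Kcont.comp (continuous_const.prodMk continuous_id)).aestronglyMeasurable
    · refine Filter.Eventually.of_forall fun a x hx => ?_
      by_cases ha : a ∈ κ
      · rw [Set.indicator_of_mem ha]
        exact le_trans (hM (x, a) ⟨Metric.ball_subset_closedBall hx, ha⟩) (le_max_left _ _)
      · rw [Set.indicator_of_notMem ha, hd1K0 (x, a) (Or.inr ha)]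
        simp
    · rw [integrable_indicator_iff hκ.isClosed.measurableSet]
      exact integrableOn_const hκ.measure_lt_top.ne
    · refine Filter.Eventually.of_forall fun a x hx => ?_
      have hc : ContDiff ℝ ∞ (fun w => K w a) := hKsm.comp (contDiff_id.prodMk contDiff_const)
      exact (hc.differentiable (by simp)).differentiableAt.hasFDerivAt
  have hGdiff : Differentiable ℝ G := fun v => (hG v).differentiableAt
  have hGcont : Continuous G := hGdiff.continuous
  have hfderivG : ∀ v, fderiv ℝ G v = G' v := fun v => (hG v).fderiv
  have hG0 : ∀ v, v ∉ κ → G v = 0 := by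
    intro v hv
    rw [hGdef]
    have h0 : ∀ v', K v v' = 0 := fun v' => hK0 v v' (Or.inl hv)
    simp [h0]
  have hG'0 : ∀ v, v ∉ κ → G' v = 0 := by
    intro v hv
    rw [hG'def]
    have h0 : ∀ v', d1K (v, v') = 0 := fun v' => hd1K0 (v, v') (Or.inl hv)
    simp [h0]
  have hG'cont : Continuous G' := by
    have heq : G' = fun v => ∫ v' in κ, d1K (v, v') := by
      funext v
      rw [hG'def]
      exact (setIntegral_eq_integral_of_forall_compl_eq_zero
        fun v' hv' => hd1K0 (v, v') (Or.inr hv')).symm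
    rw [heq]
    have hu : Continuous (Function.uncurry fun v v' => d1K (v, v')) := by
      have : (Function.uncurry fun v v' => d1K (v, v')) = d1K := by
        funext p; rfl
      rw [this]; exact hd1Kcont
    exact continuous_parametric_integral_of_continuous hu hκ
  -- coordinate notation
  set e : Fin 3 → E3 := fun i => EuclideanSpace.single i 1 with hedef
  have hvicont : ∀ i : Fin 3, Continuous fun v : E3 => v i :=
    fun i => (EuclideanSpace.proj i : E3 →L[ℝ] ℝ).continuous
  have hGicont : ∀ i : Fin 3, Continuous fun v => G v i :=
    fun i => (EuclideanSpace.proj i : E3 →L[ℝ] ℝ).continuous.comp hGcont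
  have hG'icont : ∀ i : Fin 3, Continuous fun v => G' v (e i) i := by
    intro i
    have h1 : Continuous fun v => (G' v) (e i) :=
      (ContinuousLinearMap.apply ℝ E3 (e i)).continuous.comp hG'cont
    exact (EuclideanSpace.proj i : E3 →L[ℝ] ℝ).continuous.comp h1
  have hint : ∀ {h : E3 → ℝ}, Continuous h → (∀ v, v ∉ κ → h v = 0) → Integrable h := by
    intro h hc h0
    exact hc.integrable_of_hasCompactSupport (HasCompactSupport.intro hκ h0)
  have hnsq : ∀ (x : E3) (i : Fin 3),
      fderiv ℝ (fun v : E3 => ‖v‖ ^ 2) x (e i) = 2 * x i := by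
    intro x i
    rw [(hasStrictFDerivAt_norm_sq x).hasFDerivAt.fderiv]
    have : (2 • (innerSL ℝ x)) (e i) = 2 • ((innerSL ℝ x) (e i)) := rfl
    rw [this]
    have h2 : (innerSL ℝ x) (e i) = x i := by
      rw [hedef]; simp [EuclideanSpace.inner_single_right]
    rw [h2]
    simp
  have hGi : ∀ (i : Fin 3) (x : E3),
      HasFDerivAt (fun v => G v i) ((EuclideanSpace.proj i : E3 →L[ℝ] ℝ).comp (G' x)) x :=
    fun i x => (EuclideanSpace.proj i : E3 →L[ℝ] ℝ).hasFDerivAt.comp x (hG x)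
  have hintGi : ∀ i : Fin 3, Integrable fun v : E3 => ‖v‖ ^ 2 * (G' v (e i) i) := by
    intro i
    apply hint ((continuous_norm.pow 2).mul (hG'icont i))
    intro v hv
    simp only [Pi.mul_apply, Pi.pow_apply]
    rw [hG'0 v hv]
    simp
  have hparts : ∀ i : Fin 3,
      ∫ v, ‖v‖ ^ 2 * (G' v (e i) i) = - ∫ v, (2 * v i) * (G v i) := by
    intro i
    have hgdiff : Differentiable ℝ (fun v => G v i) := fun x => (hGi i x).differentiableAt
    have hgder : ∀ x, fderiv ℝ (fun v => G v i) x (e i) = G' x (e i) i := by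
      intro x; rw [(hGi i x).fderiv]; rfl
    have h1 : Integrable fun x : E3 => fderiv ℝ (fun v : E3 => ‖v‖ ^ 2) x (e i) * G x i := by
      have heq : (fun x : E3 => fderiv ℝ (fun v : E3 => ‖v‖ ^ 2) x (e i) * G x i)
          = fun x : E3 => (2 * x i) * G x i := funext fun x => by rw [hnsq]
      rw [heq]
      apply hint ((continuous_const.mul (hvicont i)).mul (hGicont i))
      intro v hv; simp only [Pi.mul_apply, Pi.pow_apply]; rw [hG0 v hv]; simp
    have h2 : Integrable fun x : E3 => ‖x‖ ^ 2 * fderiv ℝ (fun v => G v i) x (e i) := by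
      have heq : (fun x : E3 => ‖x‖ ^ 2 * fderiv ℝ (fun v => G v i) x (e i))
          = fun x : E3 => ‖x‖ ^ 2 * (G' x (e i) i) := funext fun x => by rw [hgder]
      rw [heq]; exact hintGi i
    have h3 : Integrable fun x : E3 => ‖x‖ ^ 2 * G x i := by
      apply hint ((continuous_norm.pow 2).mul (hGicont i))
      intro v hv; simp only [Pi.mul_apply, Pi.pow_apply]; rw [hG0 v hv]; simp
    have hns : Differentiable ℝ fun v : E3 => ‖v‖ ^ 2 :=
      (contDiff_norm_sq ℝ (n := 1)).differentiable (by simp)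
    have hmain := integral_mul_fderiv_eq_neg_fderiv_mul_of_integrable h1 h2 h3 (fun x _ => hns x) (fun x _ => hgdiff x)
    calc ∫ v, ‖v‖ ^ 2 * (G' v (e i) i)
        = ∫ x, ‖x‖ ^ 2 * fderiv ℝ (fun v => G v i) x (e i) := by
          simp_rw [hgder]
      _ = - ∫ x, fderiv ℝ (fun v : E3 => ‖v‖ ^ 2) x (e i) * G x i := hmain
      _ = - ∫ v, (2 * v i) * (G v i) := by
          simp_rw [hnsq]
  -- the double integrand
  set Q : E3 → E3 → ℝ := fun v v' => ∑ i, v i * K v v' i with hQdef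
  have hKicont : ∀ i : Fin 3, Continuous fun p : E3 × E3 => K p.1 p.2 i :=
    fun i => (EuclideanSpace.proj i : E3 →L[ℝ] ℝ).continuous.comp hKcont
  have hQcont : Continuous (uncurry Q) := by
    have : uncurry Q = fun p : E3 × E3 => ∑ i, p.1 i * K p.1 p.2 i := by
      funext p; rfl
    rw [this]
    exact continuous_finset_sum _ fun i _ =>
      ((hvicont i).comp continuous_fst).mul (hKicont i)
  have hQ0 : ∀ v v', (v ∉ κ ∨ v' ∉ κ) → Q v v' = 0 := by
    intro v v' h
    rw [hQdef]
    simp only [hK0 v v' h]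
    simp
  have hQcs : HasCompactSupport (uncurry Q) := by
    apply HasCompactSupport.intro (hκ.prod hκ)
    rintro ⟨v, v'⟩ hp
    simp only [Set.mem_prod, not_and_or] at hp
    exact hQ0 v v' hp
  have hQint : ∀ v, Integrable fun v' => Q v v' := by
    intro v
    apply Continuous.integrable_of_hasCompactSupport
    · exact hQcont.comp (continuous_const.prodMk continuous_id)
    · exact HasCompactSupport.intro hκ fun v' hv' => hQ0 v v' (Or.inr hv')
  -- antisymmetry
  have hKanti : ∀ v v', K v' v = - K v v' := by
    intro v v'
    rw [hKeq, hKeq, hexch v' v]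
    have : f v • gradient f v' - f v' • gradient f v
        = -(f v' • gradient f v - f v • gradient f v') := by abel
    rw [this]
    exact matVec_neg _ _
  have hQanti : ∀ v v', Q v v' + Q v' v = 0 := by
    intro v v'
    have h0 := key_null (Ω v v') (hsymm v v') (v - v')
      (f v' • gradient f v - f v • gradient f v') (hnull v v')
    have hterm : ∀ i, v i * K v v' i + v' i * (K v' v) i
        = ((v - v') i) * (matVec (Ω v v') (f v' • gradient f v - f v • gradient f v') i) := by
      intro i
      rw [hKanti v v']
      have h1 : ((- K v v') : E3) i = -(K v v' i) := rfl
      have h2 : ((v - v') : E3) i = v i - v' i := rfl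
      rw [h1, h2, ← hKeq]
      ring
    calc Q v v' + Q v' v = ∑ i, (v i * K v v' i + v' i * (K v' v) i) := by
          rw [hQdef]; rw [Finset.sum_add_distrib]
      _ = ∑ i, ((v - v') i) * (matVec (Ω v v') (f v' • gradient f v - f v • gradient f v') i) := by
          exact Finset.sum_congr rfl fun i _ => hterm i
      _ = 0 := h0
  -- Fubini and antisymmetry give the double integral vanishes
  have hswap := integral_integral_swap_of_hasCompactSupport hQcont hQcs
    (μ := (volume : Measure E3)) (ν := (volume : Measure E3))
  have hQQ : ∫ v, ∫ v', Q v v' = 0 := by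
    have h2 : (∫ v', ∫ v, Q v v') = - ∫ v, ∫ v', Q v v' := by
      calc (∫ v', ∫ v, Q v v') = ∫ v', ∫ v, (- Q v' v) := by
            congr 1; funext v'; congr 1; funext v
            have := hQanti v v'; linarith
        _ = - ∫ v', ∫ v, Q v' v := by
            simp [integral_neg]
      -- note: `∫ v', ∫ v, Q v' v` is α-equivalent to `∫ v, ∫ v', Q v v'`
    linarith [hswap, h2]
  -- coordinates of G as integrals
  have hGcoord : ∀ (v : E3) (i : Fin 3), G v i = ∫ v', K v v' i := by
    intro v i
    have h1 : (∫ v', (EuclideanSpace.proj i : E3 →L[ℝ] ℝ) (K v v'))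
        = (EuclideanSpace.proj i : E3 →L[ℝ] ℝ) (∫ v', K v v') :=
      ContinuousLinearMap.integral_comp_comm _ (hKint v)
    rw [hGdef]
    exact h1.symm
  have hPQ : ∀ v : E3, (∑ i, v i * (G v i)) = ∫ v', Q v v' := by
    intro v
    have hKiint : ∀ i : Fin 3, Integrable fun v' => v i * K v v' i := by
      intro i
      apply Continuous.integrable_of_hasCompactSupport
      · exact continuous_const.mul ((hKicont i).comp (continuous_const.prodMk continuous_id))
      · apply HasCompactSupport.intro hκ
        intro v' hv'
        rw [hK0 v v' (Or.inr hv')]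
        simp
    calc (∑ i, v i * (G v i)) = ∑ i, ∫ v', v i * K v v' i := by
          refine Finset.sum_congr rfl fun i _ => ?_
          rw [hGcoord v i, ← integral_const_mul]
      _ = ∫ v', ∑ i, v i * K v v' i := (integral_finset_sum _ fun i _ => hKiint i).symm
      _ = ∫ v', Q v v' := by rw [hQdef]
  -- divergence is the trace of G'
  have hcoll : ∀ v, collOp Ω f v = ∑ i, G' v (e i) i := by
    intro v
    show div3 G v = _
    unfold div3
    simp_rw [hfderivG]
    rfl
  -- put everything together
  calc ∫ v, ‖v‖ ^ 2 * collOp Ω f v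
      = ∫ v, ∑ i, ‖v‖ ^ 2 * (G' v (e i) i) := by
        congr 1; funext v; rw [hcoll v, Finset.mul_sum]
    _ = ∑ i, ∫ v, ‖v‖ ^ 2 * (G' v (e i) i) := integral_finset_sum _ fun i _ => hintGi i
    _ = ∑ i : Fin 3, - ∫ v, (2 * v i) * (G v i) := Finset.sum_congr rfl fun i _ => hparts i
    _ = - ∑ i : Fin 3, ∫ v, (2 * v i) * (G v i) := by rw [Finset.sum_neg_distrib]
    _ = - ∫ v, ∑ i, (2 * v i) * (G v i) := by
        rw [integral_finset_sum]
        intro i _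
        apply hint ((continuous_const.mul (hvicont i)).mul (hGicont i))
        intro v hv; simp only [Pi.mul_apply, Pi.pow_apply]; rw [hG0 v hv]; simp
    _ = - ∫ v, 2 * ∑ i, v i * (G v i) := by
        rw [show (fun v : E3 => ∑ i, (2 * v i) * (G v i))
            = fun v : E3 => 2 * ∑ i, v i * (G v i) from funext fun v => by
          rw [Finset.mul_sum]; exact Finset.sum_congr rfl fun i _ => by ring]
    _ = - (2 * ∫ v, ∑ i, v i * (G v i)) := by rw [integral_const_mul]
    _ = - (2 * ∫ v, ∫ v', Q v v') := by
        rw [show (fun v : E3 => ∑ i, v i * (G v i))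
            = fun v : E3 => ∫ v', Q v v' from funext hPQ]
    _ = 0 := by rw [hQQ]; ring
end
end

section
/- Let ω : ℝ³ × ℝ³ → ℝ^{3×3} be a smooth matrix-valued kernel, let f : ℝ³ → ℝ be smooth and compactly supported, and let ψ : ℝ³ → ℝ be smooth. Then the weak form of the collision operator admits the double integration-by-parts representation ∫_{ℝ³} ψ(v) C_ω[f](v) dv = ∑_{i,j} ∫∫ ω_{ij}(v,v') f(v) f(v') ∂²ψ/∂v_i∂v_j (v) dv' dv + ∑_{i,j} ∫∫ [∂ω_{ij}/∂v_j (v,v') − ∂ω_{ij}/∂v'_j (v,v')] f(v) f(v') ∂ψ/∂v_i (v) dv' dv. -/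
open MeasureTheory Matrix
open scoped RealInnerProductSpace ContDiff

noncomputable section

/-- Partial derivative of a scalar function on ℝ³ in the i-th coordinate direction. -/
def pd (h : E3 → ℝ) (i : Fin 3) (v : E3) : ℝ :=
  fderiv ℝ h v (EuclideanSpace.single i 1)

set_option synthInstance.maxHeartbeats 400000
set_option maxHeartbeats 800000
set_option linter.unusedSectionVars false
section Param

variable {F : Type*} [NormedAddCommGroup F] [NormedSpace ℝ F] [CompleteSpace F]

lemma hasFDerivAt_partial_fst (H : E3 × E3 → F) (hH : ContDiff ℝ ∞ H) (v a : E3) :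
    HasFDerivAt (fun w => H (w, a))
      ((fderiv ℝ H (v, a)).comp (ContinuousLinearMap.inl ℝ E3 E3)) v :=
  ((hH.differentiable (by norm_num) (v, a)).hasFDerivAt).comp v (hasFDerivAt_prodMk_left v a)

lemma hasFDerivAt_partial_snd (H : E3 × E3 → F) (hH : ContDiff ℝ ∞ H) (v a : E3) :
    HasFDerivAt (fun w => H (v, w))
      ((fderiv ℝ H (v, a)).comp (ContinuousLinearMap.inr ℝ E3 E3)) a :=
  ((hH.differentiable (by norm_num) (v, a)).hasFDerivAt).comp a (hasFDerivAt_prodMk_right v a)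

lemma contDiff_fderiv_of_top (H : E3 × E3 → F) (hH : ContDiff ℝ ∞ H) :
    ContDiff ℝ ∞ (fderiv ℝ H) :=
  hH.fderiv_right (by norm_num)

lemma partial_fst_zero (H : E3 × E3 → F) (hH : ContDiff ℝ ∞ H) {S : Set E3}
    (hsupp : ∀ p : E3 × E3, p.2 ∉ S → H p = 0) {a : E3} (ha : a ∉ S) (v : E3) :
    (fderiv ℝ H (v, a)).comp (ContinuousLinearMap.inl ℝ E3 E3) = 0 := by
  have h1 : (fun w => H (w, a)) = fun _ : E3 => (0 : F) := funext fun w => hsupp (w, a) ha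
  have h2 := (hasFDerivAt_partial_fst H hH v a).fderiv
  rw [h1] at h2
  rw [← h2, fderiv_fun_const]
  rfl

lemma param_hasFDerivAt {S : Set E3} (hS : IsCompact S) (H : E3 × E3 → F)
    (hH : ContDiff ℝ ∞ H) (hsupp : ∀ p : E3 × E3, p.2 ∉ S → H p = 0) (v₀ : E3) :
    HasFDerivAt (fun v => ∫ v', H (v, v'))
      (∫ v', (fderiv ℝ H (v₀, v')).comp (ContinuousLinearMap.inl ℝ E3 E3)) v₀ := by
  have hc : Continuous H := hH.continuous
  have hc' : Continuous (fun p : E3 × E3 =>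
      (fderiv ℝ H p).comp (ContinuousLinearMap.inl ℝ E3 E3)) :=
    ((contDiff_fderiv_of_top H hH).continuous).clm_comp continuous_const
  obtain ⟨C, hC⟩ := ((isCompact_closedBall v₀ 1).prod hS).exists_bound_of_continuousOn
    (hc'.continuousOn)
  apply hasFDerivAt_integral_of_dominated_of_fderiv_le (s := Metric.ball v₀ 1)
    (F := fun x a => H (x, a))
    (F' := fun x a => (fderiv ℝ H (x, a)).comp (ContinuousLinearMap.inl ℝ E3 E3))
    (bound := S.indicator fun _ => max C 0) (Metric.ball_mem_nhds v₀ one_pos)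
  · exact Filter.Eventually.of_forall fun x =>
      (hc.comp (Continuous.prodMk_right x)).aestronglyMeasurable
  · exact (hc.comp (Continuous.prodMk_right v₀)).integrable_of_hasCompactSupport
      (HasCompactSupport.intro hS fun x hx => hsupp (v₀, x) hx)
  · exact (hc'.comp (Continuous.prodMk_right v₀)).aestronglyMeasurable
  · refine Filter.Eventually.of_forall fun a => fun x hx => ?_
    by_cases ha : a ∈ S
    · rw [Set.indicator_of_mem ha]
      refine le_trans (hC (x, a) ⟨Metric.ball_subset_closedBall hx, ha⟩) (le_max_left _ _)
    · rw [Set.indicator_of_notMem ha, partial_fst_zero H hH hsupp ha x, norm_zero]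
  · exact (integrable_indicator_iff hS.isClosed.measurableSet).2
      (integrableOn_const hS.measure_lt_top.ne)
  · exact Filter.Eventually.of_forall fun a => fun x _ => hasFDerivAt_partial_fst H hH x a

lemma param_integrable {S : Set E3} (hS : IsCompact S) (H : E3 × E3 → F)
    (hH : Continuous H) (hsupp : ∀ p : E3 × E3, p.2 ∉ S → H p = 0) (v : E3) :
    Integrable (fun v' => H (v, v')) :=
  (hH.comp (Continuous.prodMk_right v)).integrable_of_hasCompactSupport
    (HasCompactSupport.intro hS fun x hx => hsupp (v, x) hx)

lemma param_fderiv_integrable {S : Set E3} (hS : IsCompact S) (H : E3 × E3 → F)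
    (hH : ContDiff ℝ ∞ H) (hsupp : ∀ p : E3 × E3, p.2 ∉ S → H p = 0) (v : E3) :
    Integrable (fun v' => (fderiv ℝ H (v, v')).comp (ContinuousLinearMap.inl ℝ E3 E3)) :=
  param_integrable hS _ (((contDiff_fderiv_of_top H hH).continuous).clm_comp continuous_const)
    (fun p hp => partial_fst_zero H hH hsupp hp p.1) v

end Param

lemma pd_param {S : Set E3} (hS : IsCompact S) (H : E3 × E3 → ℝ)
    (hH : ContDiff ℝ ∞ H) (hsupp : ∀ p : E3 × E3, p.2 ∉ S → H p = 0) (i : Fin 3) (v₀ : E3) :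
    pd (fun v => ∫ v', H (v, v')) i v₀ = ∫ v', fderiv ℝ H (v₀, v') (EuclideanSpace.single i 1, 0) := by
  rw [pd, (param_hasFDerivAt hS H hH hsupp v₀).fderiv,
    ContinuousLinearMap.integral_apply (param_fderiv_integrable hS H hH hsupp v₀)]
  rfl
-- Part B: basic facts

lemma contDiff_pd (h : E3 → ℝ) (hh : ContDiff ℝ ∞ h) (j : Fin 3) :
    ContDiff ℝ ∞ (fun v => pd h j v) :=
  (hh.fderiv_right (by norm_num)).clm_apply contDiff_const

lemma gradient_apply (h : E3 → ℝ) (v : E3) (j : Fin 3) :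
    gradient h v j = pd h j v := by
  have h1 : ⟪gradient h v, EuclideanSpace.single j (1:ℝ)⟫ = fderiv ℝ h v (EuclideanSpace.single j 1) :=
    InnerProductSpace.toDual_symm_apply
  rw [EuclideanSpace.inner_single_right] at h1
  simpa [pd] using h1

lemma pd_zero_of_not_mem (h : E3 → ℝ) (j : Fin 3) {v : E3} (hv : v ∉ tsupport h) :
    pd h j v = 0 := by
  rw [pd, fderiv_of_notMem_tsupport (𝕜 := ℝ) hv]; rfl

lemma image_zero_of_not_mem (h : E3 → ℝ) {v : E3} (hv : v ∉ tsupport h) : h v = 0 :=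
  image_eq_zero_of_notMem_tsupport hv

def Kfun (Ω : E3 → E3 → Matrix (Fin 3) (Fin 3) ℝ) (f : E3 → ℝ) (i : Fin 3) : E3 × E3 → ℝ :=
  fun p => ∑ j : Fin 3, Ω p.1 p.2 i j * (f p.2 * pd f j p.1 - f p.1 * pd f j p.2)

lemma collKer_apply (Ω : E3 → E3 → Matrix (Fin 3) (Fin 3) ℝ) (f : E3 → ℝ) (v v' : E3) (i : Fin 3) :
    collKer Ω f v v' i = Kfun Ω f i (v, v') := by
  simp only [collKer, matVec, Kfun, EuclideanSpace.equiv,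
    PiLp.continuousLinearEquiv_symm_apply, PiLp.continuousLinearEquiv_apply,
    Matrix.mulVec, dotProduct]
  refine Finset.sum_congr rfl fun j _ => ?_
  congr 1
  show (f v' • gradient f v - f v • gradient f v') j = _
  simp [gradient_apply]

lemma contDiff_Kfun (Ω : E3 → E3 → Matrix (Fin 3) (Fin 3) ℝ)
    (hΩ : ∀ i j, ContDiff ℝ ∞ fun p : E3 × E3 => Ω p.1 p.2 i j)
    (f : E3 → ℝ) (hf : ContDiff ℝ ∞ f) (i : Fin 3) :
    ContDiff ℝ ∞ (Kfun Ω f i) := by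
  apply ContDiff.sum fun j _ => ?_
  exact (hΩ i j).mul (((hf.comp contDiff_snd).mul
    ((contDiff_pd f hf j).comp contDiff_fst)).sub
    ((hf.comp contDiff_fst).mul ((contDiff_pd f hf j).comp contDiff_snd)))

lemma Kfun_zero_snd (Ω : E3 → E3 → Matrix (Fin 3) (Fin 3) ℝ) (f : E3 → ℝ) (i : Fin 3)
    {p : E3 × E3} (hp : p.2 ∉ tsupport f) : Kfun Ω f i p = 0 := by
  simp [Kfun, image_zero_of_not_mem f hp, pd_zero_of_not_mem f _ hp]

lemma Kfun_zero_fst (Ω : E3 → E3 → Matrix (Fin 3) (Fin 3) ℝ) (f : E3 → ℝ) (i : Fin 3)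
    {p : E3 × E3} (hp : p.1 ∉ tsupport f) : Kfun Ω f i p = 0 := by
  simp [Kfun, image_zero_of_not_mem f hp, pd_zero_of_not_mem f _ hp]

lemma pd_pd_comm (ψ : E3 → ℝ) (hψ : ContDiff ℝ ∞ ψ) (i j : Fin 3) (v : E3) :
    pd (fun w => pd ψ i w) j v = pd (fun w => pd ψ j w) i v := by
  have hsym : IsSymmSndFDerivAt ℝ ψ v := hψ.contDiffAt.isSymmSndFDerivAt (by simpa using WithTop.coe_le_coe.2 (le_top : (2:ℕ∞) ≤ ⊤))
  have key : ∀ a b : Fin 3, pd (fun w => pd ψ a w) b v =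
      fderiv ℝ (fderiv ℝ ψ) v (EuclideanSpace.single b 1) (EuclideanSpace.single a 1) := by
    intro a b
    have hC : ContDiff ℝ ∞ (fderiv ℝ ψ) := hψ.fderiv_right (by norm_num)
    have hdf : HasFDerivAt (fderiv ℝ ψ) (fderiv ℝ (fderiv ℝ ψ) v) v :=
      (hC.differentiable (by simpa using WithTop.coe_le_coe.2 (le_top : (1:ℕ∞) ≤ ⊤)) v).hasFDerivAt
    have hcomp : HasFDerivAt (fun w => pd ψ a w)
        ((ContinuousLinearMap.apply ℝ ℝ (EuclideanSpace.single a 1)).comp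
          (fderiv ℝ (fderiv ℝ ψ) v)) v :=
      (ContinuousLinearMap.apply ℝ ℝ (EuclideanSpace.single a (1:ℝ))).hasFDerivAt.comp v hdf
    rw [pd, hcomp.fderiv]; rfl
  rw [key i j, key j i, hsym]
-- Part C: more param helpers

section Param2

variable {F : Type*} [NormedAddCommGroup F] [NormedSpace ℝ F] [CompleteSpace F]

lemma param_continuous {S : Set E3} (hS : IsCompact S) (H : E3 × E3 → F)
    (hH : ContDiff ℝ ∞ H) (hsupp : ∀ p : E3 × E3, p.2 ∉ S → H p = 0) :
    Continuous (fun v => ∫ v', H (v, v')) :=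
  Differentiable.continuous (fun v => (param_hasFDerivAt hS H hH hsupp v).differentiableAt)

lemma param_differentiable {S : Set E3} (hS : IsCompact S) (H : E3 × E3 → F)
    (hH : ContDiff ℝ ∞ H) (hsupp : ∀ p : E3 × E3, p.2 ∉ S → H p = 0) :
    Differentiable ℝ (fun v => ∫ v', H (v, v')) :=
  fun v => (param_hasFDerivAt hS H hH hsupp v).differentiableAt

lemma param_zero_fst {S : Set E3} (H : E3 × E3 → F)
    (hsupp1 : ∀ p : E3 × E3, p.1 ∉ S → H p = 0) {v : E3} (hv : v ∉ S) :
    ∫ v', H (v, v') = 0 := by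
  have : (fun v' => H (v, v')) = fun _ => 0 := funext fun v' => hsupp1 (v, v') hv
  rw [this, integral_const]; simp

lemma param_deriv_zero_snd (H : E3 × E3 → F) (hH : ContDiff ℝ ∞ H) {S : Set E3}
    (hsupp : ∀ p : E3 × E3, p.2 ∉ S → H p = 0) {p : E3 × E3} (hp : p.2 ∉ S) (w : E3) :
    fderiv ℝ H p (w, 0) = 0 := by
  have h := partial_fst_zero H hH hsupp hp p.1
  have : fderiv ℝ H p (w, 0) = ((fderiv ℝ H (p.1, p.2)).comp (ContinuousLinearMap.inl ℝ E3 E3)) w := rfl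
  rw [this, h]; rfl

lemma fderiv_zero_fst (H : E3 × E3 → F) {S : Set E3} (hSc : IsClosed S)
    (hsupp1 : ∀ p : E3 × E3, p.1 ∉ S → H p = 0) {p : E3 × E3} (hp : p.1 ∉ S) :
    fderiv ℝ H p = 0 := by
  have hmem : (Sᶜ ×ˢ (Set.univ : Set E3)) ∈ nhds p :=
    prod_mem_nhds (hSc.isOpen_compl.mem_nhds hp) Filter.univ_mem
  have heq : H =ᶠ[nhds p] (fun _ => 0) := by
    filter_upwards [hmem] with q hq
    exact hsupp1 q hq.1
  rw [heq.fderiv_eq]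
  exact fderiv_const_apply 0

lemma param_deriv_contDiff (H : E3 × E3 → F) (hH : ContDiff ℝ ∞ H) (u : E3 × E3) :
    ContDiff ℝ ∞ (fun p => fderiv ℝ H p u) :=
  (contDiff_fderiv_of_top H hH).clm_apply contDiff_const

end Param2

lemma int_helper {S : Set E3} (hS : IsCompact S) {u h : E3 → ℝ}
    (hu : Continuous u) (hh : Continuous h) (h0 : ∀ v, v ∉ S → h v = 0) :
    Integrable (fun v => u v * h v) :=
  (hu.mul hh).integrable_of_hasCompactSupport
    ((HasCompactSupport.intro hS h0).mul_left)
-- Part D: collOp in terms of Kfun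

lemma contDiff_G (Ω : E3 → E3 → Matrix (Fin 3) (Fin 3) ℝ)
    (hΩ : ∀ i j, ContDiff ℝ ∞ fun p : E3 × E3 => Ω p.1 p.2 i j)
    (f : E3 → ℝ) (hf : ContDiff ℝ ∞ f) :
    ContDiff ℝ ∞ (fun p : E3 × E3 => collKer Ω f p.1 p.2) := by
  rw [contDiff_euclidean]
  intro i
  have : (fun p : E3 × E3 => collKer Ω f p.1 p.2 i) = Kfun Ω f i :=
    funext fun p => collKer_apply Ω f p.1 p.2 i
  rw [this]
  exact contDiff_Kfun Ω hΩ f hf i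

lemma G_zero_snd (Ω : E3 → E3 → Matrix (Fin 3) (Fin 3) ℝ) (f : E3 → ℝ)
    {p : E3 × E3} (hp : p.2 ∉ tsupport f) : collKer Ω f p.1 p.2 = 0 := by
  ext i
  rw [collKer_apply]
  exact Kfun_zero_snd Ω f i hp

lemma collOp_eq (Ω : E3 → E3 → Matrix (Fin 3) (Fin 3) ℝ)
    (hΩ : ∀ i j, ContDiff ℝ ∞ fun p : E3 × E3 => Ω p.1 p.2 i j)
    (f : E3 → ℝ) (hf : ContDiff ℝ ∞ f) (hfc : HasCompactSupport f) (v : E3) :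
    collOp Ω f v = ∑ i : Fin 3, pd (fun w => ∫ v', Kfun Ω f i (w, v')) i v := by
  have hS : IsCompact (tsupport f) := hfc
  have hG := contDiff_G Ω hΩ f hf
  have hGs : ∀ p : E3 × E3, p.2 ∉ tsupport f → collKer Ω f p.1 p.2 = 0 :=
    fun p hp => G_zero_snd Ω f hp
  have hg := param_hasFDerivAt hS _ hG hGs v
  rw [collOp, div3]
  refine Finset.sum_congr rfl fun i _ => ?_
  have hci : HasFDerivAt (fun w => (∫ v', collKer Ω f w v' : E3) i)
      ((EuclideanSpace.proj (𝕜 := ℝ) i).comp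
        (∫ v', (fderiv ℝ (fun p : E3 × E3 => collKer Ω f p.1 p.2) (v, v')).comp
          (ContinuousLinearMap.inl ℝ E3 E3))) v :=
    (EuclideanSpace.proj (𝕜 := ℝ) i).hasFDerivAt.comp v hg
  have h1 : fderiv ℝ (fun w => ∫ v', collKer Ω f w v') v (EuclideanSpace.single i 1) i =
      fderiv ℝ (fun w => (∫ v', collKer Ω f w v' : E3) i) v (EuclideanSpace.single i 1) := by
    rw [hg.fderiv, hci.fderiv]
    rfl
  rw [h1]
  have h2 : (fun w => (∫ v', collKer Ω f w v' : E3) i) =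
      (fun w => ∫ v', Kfun Ω f i (w, v')) := by
    funext w
    have hint : Integrable (fun v' => collKer Ω f w v') :=
      param_integrable hS _ hG.continuous hGs w
    have := (EuclideanSpace.proj (𝕜 := ℝ) i).integral_comp_comm hint
    simp only [PiLp.proj_apply] at this
    rw [show (∫ v', collKer Ω f w v' : E3) i = ∫ v', (collKer Ω f w v') i from this.symm]
    exact integral_congr_ae (Filter.Eventually.of_forall fun v' => by
      simp [collKer_apply])
  rw [pd, h2]
-- Part E: the building blocks A, A', B

def Ifun (Ω : E3 → E3 → Matrix (Fin 3) (Fin 3) ℝ) (f : E3 → ℝ) (i : Fin 3) : E3 → ℝ :=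
  fun v => ∫ v', Kfun Ω f i (v, v')

def Qfun (Ω : E3 → E3 → Matrix (Fin 3) (Fin 3) ℝ) (i j : Fin 3) : E3 × E3 → ℝ :=
  fun p => Ω p.1 p.2 i j

def Afun (Ω : E3 → E3 → Matrix (Fin 3) (Fin 3) ℝ) (f : E3 → ℝ) (i j : Fin 3) : E3 × E3 → ℝ :=
  fun p => Ω p.1 p.2 i j * f p.2

def A'fun (Ω : E3 → E3 → Matrix (Fin 3) (Fin 3) ℝ) (f : E3 → ℝ) (i j : Fin 3) : E3 × E3 → ℝ :=
  fun p => fderiv ℝ (Qfun Ω i j) p (EuclideanSpace.single j 1, 0) * f p.2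

def Bfun (Ω : E3 → E3 → Matrix (Fin 3) (Fin 3) ℝ) (f : E3 → ℝ) (i j : Fin 3) : E3 × E3 → ℝ :=
  fun p => fderiv ℝ (Qfun Ω i j) p (0, EuclideanSpace.single j 1) * f p.2

def Aint (Ω : E3 → E3 → Matrix (Fin 3) (Fin 3) ℝ) (f : E3 → ℝ) (i j : Fin 3) : E3 → ℝ :=
  fun v => ∫ v', Afun Ω f i j (v, v')

def A'int (Ω : E3 → E3 → Matrix (Fin 3) (Fin 3) ℝ) (f : E3 → ℝ) (i j : Fin 3) : E3 → ℝ :=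
  fun v => ∫ v', A'fun Ω f i j (v, v')

def Bint (Ω : E3 → E3 → Matrix (Fin 3) (Fin 3) ℝ) (f : E3 → ℝ) (i j : Fin 3) : E3 → ℝ :=
  fun v => ∫ v', Bfun Ω f i j (v, v')

section E

variable (Ω : E3 → E3 → Matrix (Fin 3) (Fin 3) ℝ)
    (hΩ : ∀ i j, ContDiff ℝ ∞ fun p : E3 × E3 => Ω p.1 p.2 i j)
    (f : E3 → ℝ) (hf : ContDiff ℝ ∞ f) (hfc : HasCompactSupport f)

include hΩ hf hfc

omit hfc in
lemma contDiff_Afun (i j : Fin 3) : ContDiff ℝ ∞ (Afun Ω f i j) :=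
  (hΩ i j).mul (hf.comp contDiff_snd)

omit hfc in
lemma contDiff_A'fun (i j : Fin 3) : ContDiff ℝ ∞ (A'fun Ω f i j) :=
  (param_deriv_contDiff _ (hΩ i j) _).mul (hf.comp contDiff_snd)

omit hfc in
lemma contDiff_Bfun (i j : Fin 3) : ContDiff ℝ ∞ (Bfun Ω f i j) :=
  (param_deriv_contDiff _ (hΩ i j) _).mul (hf.comp contDiff_snd)

omit hΩ hf hfc in
lemma Afun_zero (i j : Fin 3) {p : E3 × E3} (hp : p.2 ∉ tsupport f) : Afun Ω f i j p = 0 := by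
  simp [Afun, image_zero_of_not_mem f hp]

omit hΩ hf hfc in
lemma A'fun_zero (i j : Fin 3) {p : E3 × E3} (hp : p.2 ∉ tsupport f) : A'fun Ω f i j p = 0 := by
  simp [A'fun, image_zero_of_not_mem f hp]

omit hΩ hf hfc in
lemma Bfun_zero (i j : Fin 3) {p : E3 × E3} (hp : p.2 ∉ tsupport f) : Bfun Ω f i j p = 0 := by
  simp [Bfun, image_zero_of_not_mem f hp]

omit hfc in
lemma cont_pdQ_snd (i j : Fin 3) (v : E3) :
    (fun v' => fderiv ℝ (fun w => Ω v w i j) v' (EuclideanSpace.single j 1)) =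
      fun v' => fderiv ℝ (Qfun Ω i j) (v, v') (0, EuclideanSpace.single j 1) := by
  funext v'
  have h := (hasFDerivAt_partial_snd (Qfun Ω i j) (hΩ i j) v v').fderiv
  rw [show (fun w => Ω v w i j) = (fun w => Qfun Ω i j (v, w)) from rfl, h]
  rfl

omit hfc in
lemma cont_pdQ_fst (i j : Fin 3) (v' : E3) :
    (fun v => fderiv ℝ (fun w => Ω w v' i j) v (EuclideanSpace.single j 1)) =
      fun v => fderiv ℝ (Qfun Ω i j) (v, v') (EuclideanSpace.single j 1, 0) := by
  funext v
  have h := (hasFDerivAt_partial_fst (Qfun Ω i j) (hΩ i j) v v').fderiv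
  rw [show (fun w => Ω w v' i j) = (fun w => Qfun Ω i j (w, v')) from rfl, h]
  rfl

-- inner integration by parts
lemma inner_ibp (i j : Fin 3) (v : E3) :
    ∫ v', Ω v v' i j * pd f j v' = -∫ v', Bfun Ω f i j (v, v') := by
  have hS : IsCompact (tsupport f) := hfc
  have hQv : ContDiff ℝ ∞ (fun w => Ω v w i j) :=
    (hΩ i j).comp (contDiff_const.prodMk contDiff_id)
  have hcont1 : Continuous (fun v' => fderiv ℝ (fun w => Ω v w i j) v' (EuclideanSpace.single j 1)) := by
    rw [cont_pdQ_snd Ω hΩ f hf i j v]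
    exact ((param_deriv_contDiff _ (hΩ i j) _).comp
      (contDiff_const.prodMk contDiff_id)).continuous
  have h := integral_mul_fderiv_eq_neg_fderiv_mul_of_integrable
    (μ := (volume : Measure E3)) (f := fun v' => Ω v v' i j) (g := f)
    (v := EuclideanSpace.single j 1)
    (int_helper hS hcont1 hf.continuous (fun w hw => image_zero_of_not_mem f hw))
    (int_helper hS (hQv.continuous) (contDiff_pd f hf j).continuous
      (fun w hw => pd_zero_of_not_mem f j hw))
    (int_helper hS (hQv.continuous) hf.continuous (fun w hw => image_zero_of_not_mem f hw))
    (fun x _ => hQv.differentiable (by norm_num) x) (fun x _ => hf.differentiable (by norm_num) x)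
  rw [show (fun v' => Ω v v' i j * pd f j v') =
    (fun v' => Ω v v' i j * fderiv ℝ f v' (EuclideanSpace.single j 1)) from rfl, h]
  congr 1
  refine integral_congr_ae (Filter.Eventually.of_forall fun v' => ?_)
  have := congrFun (cont_pdQ_snd Ω hΩ f hf i j v) v'
  simp only [Bfun]
  rw [← this]

end E
-- Part F

section F

variable (Ω : E3 → E3 → Matrix (Fin 3) (Fin 3) ℝ)
    (hΩ : ∀ i j, ContDiff ℝ ∞ fun p : E3 × E3 => Ω p.1 p.2 i j)
    (f : E3 → ℝ) (hf : ContDiff ℝ ∞ f) (hfc : HasCompactSupport f)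

include hΩ hf hfc

lemma Ifun_eq (i : Fin 3) (v : E3) :
    Ifun Ω f i v = ∑ j : Fin 3, (Aint Ω f i j v * pd f j v + f v * Bint Ω f i j v) := by
  have hS : IsCompact (tsupport f) := hfc
  have hQv : ∀ j, Continuous (fun v' => Ω v v' i j) := fun j =>
    ((hΩ i j).comp (contDiff_const.prodMk contDiff_id)).continuous
  have hint1 : ∀ j, Integrable (fun v' => (Ω v v' i j * pd f j v) * f v') := fun j =>
    int_helper hS ((hQv j).mul continuous_const) hf.continuous
      (fun w hw => image_zero_of_not_mem f hw)
  have hint2 : ∀ j, Integrable (fun v' => (Ω v v' i j * f v) * pd f j v') := fun j =>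
    int_helper hS ((hQv j).mul continuous_const) (contDiff_pd f hf j).continuous
      (fun w hw => pd_zero_of_not_mem f j hw)
  have step1 : Ifun Ω f i v = ∑ j : Fin 3,
      ∫ v', ((Ω v v' i j * pd f j v) * f v' - (Ω v v' i j * f v) * pd f j v') := by
    rw [Ifun, show (fun v' => Kfun Ω f i (v, v')) = fun v' => ∑ j : Fin 3,
      ((Ω v v' i j * pd f j v) * f v' - (Ω v v' i j * f v) * pd f j v') from
      funext fun v' => by
        simp only [Kfun]
        exact Finset.sum_congr rfl fun j _ => by ring]
    exact integral_finset_sum _ fun j _ => (hint1 j).sub (hint2 j)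
  rw [step1]
  refine Finset.sum_congr rfl fun j _ => ?_
  rw [integral_sub (hint1 j) (hint2 j)]
  have e1 : ∫ v', (Ω v v' i j * pd f j v) * f v' = Aint Ω f i j v * pd f j v := by
    rw [Aint, ← integral_mul_const]
    exact integral_congr_ae (.of_forall fun v' => by simp only [Afun]; ring)
  have e2 : ∫ v', (Ω v v' i j * f v) * pd f j v' = f v * ∫ v', Ω v v' i j * pd f j v' := by
    rw [← integral_const_mul]
    exact integral_congr_ae (.of_forall fun v' => by ring)
  rw [e1, e2, inner_ibp Ω hΩ f hf hfc i j v, Bint]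
  ring

omit hfc in
lemma hKi (i : Fin 3) : ContDiff ℝ ∞ (Kfun Ω f i) := contDiff_Kfun Ω hΩ f hf i

lemma Aint_cont (i j : Fin 3) : Continuous (Aint Ω f i j) :=
  param_continuous hfc _ (contDiff_Afun Ω hΩ f hf i j) (fun p hp => Afun_zero Ω f i j hp)

lemma Aint_diff (i j : Fin 3) : Differentiable ℝ (Aint Ω f i j) :=
  param_differentiable hfc _ (contDiff_Afun Ω hΩ f hf i j) (fun p hp => Afun_zero Ω f i j hp)

lemma A'int_cont (i j : Fin 3) : Continuous (A'int Ω f i j) :=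
  param_continuous hfc _ (contDiff_A'fun Ω hΩ f hf i j) (fun p hp => A'fun_zero Ω f i j hp)

lemma Bint_cont (i j : Fin 3) : Continuous (Bint Ω f i j) :=
  param_continuous hfc _ (contDiff_Bfun Ω hΩ f hf i j) (fun p hp => Bfun_zero Ω f i j hp)

lemma pd_Aint (i j : Fin 3) (v : E3) : pd (Aint Ω f i j) j v = A'int Ω f i j v := by
  have h := pd_param hfc (Afun Ω f i j) (contDiff_Afun Ω hΩ f hf i j)
    (fun p hp => Afun_zero Ω f i j hp) j v
  rw [show pd (Aint Ω f i j) j v =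
    pd (fun v => ∫ v', Afun Ω f i j (v, v')) j v from rfl, h, A'int]
  refine integral_congr_ae (.of_forall fun v' => ?_)
  have h1 : fderiv ℝ (Afun Ω f i j) (v, v') (EuclideanSpace.single j 1, 0) =
      fderiv ℝ (fun w => Afun Ω f i j (w, v')) v (EuclideanSpace.single j 1) := by
    rw [(hasFDerivAt_partial_fst (Afun Ω f i j) (contDiff_Afun Ω hΩ f hf i j) v v').fderiv]
    rfl
  have hdc : DifferentiableAt ℝ (fun w => Ω w v' i j) v :=
    ((hΩ i j).comp (contDiff_id.prodMk contDiff_const)).differentiable (by norm_num) v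
  have h2 : (fun w => Afun Ω f i j (w, v')) = fun w => (fun w => Ω w v' i j) w * f v' := rfl
  show (fderiv ℝ (Afun Ω f i j) (v, v')) (EuclideanSpace.single j 1, 0) = A'fun Ω f i j (v, v')
  rw [h1, h2, fderiv_mul_const hdc]
  have h3 := congrFun (cont_pdQ_fst Ω hΩ f hf i j v') v
  simp only [A'fun]
  rw [ContinuousLinearMap.smul_apply, ← h3]
  simp [mul_comm]
end F
-- Part G

section G

variable (Ω : E3 → E3 → Matrix (Fin 3) (Fin 3) ℝ)
    (hΩ : ∀ i j, ContDiff ℝ ∞ fun p : E3 × E3 => Ω p.1 p.2 i j)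
    (f : E3 → ℝ) (hf : ContDiff ℝ ∞ f) (hfc : HasCompactSupport f)
    (ψ : E3 → ℝ) (hψ : ContDiff ℝ ∞ ψ)

include hΩ hf hfc

omit hΩ hf in
lemma Ifun_zero (i : Fin 3) {v : E3} (hv : v ∉ tsupport f) : Ifun Ω f i v = 0 :=
  param_zero_fst _ (fun p hp => Kfun_zero_fst Ω f i hp) hv

lemma Ifun_cont (i : Fin 3) : Continuous (Ifun Ω f i) :=
  param_continuous hfc _ (hKi Ω hΩ f hf i) (fun p hp => Kfun_zero_snd Ω f i hp)

lemma Ifun_diff (i : Fin 3) : Differentiable ℝ (Ifun Ω f i) :=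
  param_differentiable hfc _ (hKi Ω hΩ f hf i) (fun p hp => Kfun_zero_snd Ω f i hp)

lemma pd_Ifun_fun (i : Fin 3) : (fun v => pd (Ifun Ω f i) i v) =
    fun v => ∫ v', fderiv ℝ (Kfun Ω f i) (v, v') (EuclideanSpace.single i 1, 0) :=
  funext fun v => pd_param hfc _ (hKi Ω hΩ f hf i) (fun p hp => Kfun_zero_snd Ω f i hp) i v

lemma pd_Ifun_cont (i : Fin 3) : Continuous (fun v => pd (Ifun Ω f i) i v) := by
  rw [pd_Ifun_fun Ω hΩ f hf hfc i]
  exact param_continuous hfc _ (param_deriv_contDiff _ (hKi Ω hΩ f hf i) _)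
    (fun p hp => param_deriv_zero_snd _ (hKi Ω hΩ f hf i)
      (fun q hq => Kfun_zero_snd Ω f i hq) hp _)

lemma pd_Ifun_zero (i : Fin 3) {v : E3} (hv : v ∉ tsupport f) :
    pd (Ifun Ω f i) i v = 0 := by
  rw [congrFun (pd_Ifun_fun Ω hΩ f hf hfc i) v]
  refine param_zero_fst
    (fun p : E3 × E3 => fderiv ℝ (Kfun Ω f i) p (EuclideanSpace.single i 1, 0))
    (fun p hp => ?_) hv
  show (fderiv ℝ (Kfun Ω f i) p) (EuclideanSpace.single i 1, 0) = 0
  rw [fderiv_zero_fst (Kfun Ω f i) (isClosed_tsupport f)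
    (fun q hq => Kfun_zero_fst Ω f i hq) hp]
  rfl

include hψ in
lemma ibp1 (i : Fin 3) :
    ∫ v, ψ v * pd (Ifun Ω f i) i v = -∫ v, pd ψ i v * Ifun Ω f i v := by
  have hS : IsCompact (tsupport f) := hfc
  exact integral_mul_fderiv_eq_neg_fderiv_mul_of_integrable
    (int_helper hS (contDiff_pd ψ hψ i).continuous (Ifun_cont Ω hΩ f hf hfc i)
      (fun w hw => Ifun_zero Ω f hfc i hw))
    (int_helper hS hψ.continuous (pd_Ifun_cont Ω hΩ f hf hfc i)
      (fun w hw => pd_Ifun_zero Ω hΩ f hf hfc i hw))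
    (int_helper hS hψ.continuous (Ifun_cont Ω hΩ f hf hfc i)
      (fun w hw => Ifun_zero Ω f hfc i hw))
    (fun x _ => hψ.differentiable (by norm_num) x) (fun x _ => Ifun_diff Ω hΩ f hf hfc i x)

include hψ in
lemma fderiv_uprod (i j : Fin 3) :
    (fun v => fderiv ℝ (fun w => pd ψ i w * Aint Ω f i j w) v (EuclideanSpace.single j 1)) =
      fun v => pd (fun w => pd ψ i w) j v * Aint Ω f i j v + pd ψ i v * A'int Ω f i j v := by
  funext v
  have h1 : DifferentiableAt ℝ (fun w => pd ψ i w) v :=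
    ((contDiff_pd ψ hψ i).differentiable (by norm_num)) v
  have h2 : DifferentiableAt ℝ (Aint Ω f i j) v := Aint_diff Ω hΩ f hf hfc i j v
  rw [fderiv_fun_mul h1 h2]
  rw [ContinuousLinearMap.add_apply, ContinuousLinearMap.smul_apply,
    ContinuousLinearMap.smul_apply]
  rw [← pd_Aint Ω hΩ f hf hfc i j v]
  show pd ψ i v • pd (Aint Ω f i j) j v + Aint Ω f i j v • pd (fun w => pd ψ i w) j v = _
  simp only [smul_eq_mul]
  ring

include hψ in
lemma ibp2 (i j : Fin 3) :
    ∫ v, (pd ψ i v * Aint Ω f i j v) * pd f j v =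
      -∫ v, (pd (fun w => pd ψ i w) j v * Aint Ω f i j v + pd ψ i v * A'int Ω f i j v) * f v := by
  have hS : IsCompact (tsupport f) := hfc
  have hu : Continuous (fun v => pd ψ i v * Aint Ω f i j v) :=
    (contDiff_pd ψ hψ i).continuous.mul (Aint_cont Ω hΩ f hf hfc i j)
  have hder : Continuous (fun v => pd (fun w => pd ψ i w) j v * Aint Ω f i j v +
      pd ψ i v * A'int Ω f i j v) :=
    ((contDiff_pd _ (contDiff_pd ψ hψ i) j).continuous.mul (Aint_cont Ω hΩ f hf hfc i j)).add
      ((contDiff_pd ψ hψ i).continuous.mul (A'int_cont Ω hΩ f hf hfc i j))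
  have hint1 : Integrable (fun v =>
      fderiv ℝ (fun w => pd ψ i w * Aint Ω f i j w) v (EuclideanSpace.single j 1) * f v) := by
    rw [show (fun v =>
      fderiv ℝ (fun w => pd ψ i w * Aint Ω f i j w) v (EuclideanSpace.single j 1) * f v) =
      fun v => (pd (fun w => pd ψ i w) j v * Aint Ω f i j v + pd ψ i v * A'int Ω f i j v) * f v from
      funext fun v => by rw [congrFun (fderiv_uprod Ω hΩ f hf hfc ψ hψ i j) v]]
    exact int_helper hS hder hf.continuous (fun w hw => image_zero_of_not_mem f hw)
  have h := integral_mul_fderiv_eq_neg_fderiv_mul_of_integrable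
    (μ := (volume : Measure E3)) (f := fun w => pd ψ i w * Aint Ω f i j w) (g := f)
    (v := EuclideanSpace.single j 1)
    hint1
    (int_helper hS hu (contDiff_pd f hf j).continuous (fun w hw => pd_zero_of_not_mem f j hw))
    (int_helper hS hu hf.continuous (fun w hw => image_zero_of_not_mem f hw))
    (fun x _ => (((contDiff_pd ψ hψ i).differentiable (by norm_num)).mul (Aint_diff Ω hΩ f hf hfc i j)) x)
    (fun x _ => hf.differentiable (by norm_num) x)
  calc ∫ v, (pd ψ i v * Aint Ω f i j v) * pd f j v
      = ∫ v, (pd ψ i v * Aint Ω f i j v) * fderiv ℝ f v (EuclideanSpace.single j 1) := rfl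
    _ = -∫ v, fderiv ℝ (fun w => pd ψ i w * Aint Ω f i j w) v (EuclideanSpace.single j 1) * f v := h
    _ = -∫ v, (pd (fun w => pd ψ i w) j v * Aint Ω f i j v + pd ψ i v * A'int Ω f i j v) * f v := by
        congr 1
        exact integral_congr_ae (.of_forall fun v => by
          show fderiv ℝ (fun w => pd ψ i w * Aint Ω f i j w) v (EuclideanSpace.single j 1) * f v = _
          rw [congrFun (fderiv_uprod Ω hΩ f hf hfc ψ hψ i j) v])

end G
-- Part H: final assembly

section H

variable (Ω : E3 → E3 → Matrix (Fin 3) (Fin 3) ℝ)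
    (hΩ : ∀ i j, ContDiff ℝ ∞ fun p : E3 × E3 => Ω p.1 p.2 i j)
    (f : E3 → ℝ) (hf : ContDiff ℝ ∞ f) (hfc : HasCompactSupport f)
    (ψ : E3 → ℝ) (hψ : ContDiff ℝ ∞ ψ)

include hΩ hf hfc hψ

lemma group1_eq (i j : Fin 3) :
    (∫ v, ∫ v', Ω v v' i j * (f v * f v') * pd (fun w => pd ψ j w) i v) =
      ∫ v, (pd (fun w => pd ψ i w) j v * Aint Ω f i j v) * f v := by
  refine integral_congr_ae (.of_forall fun v => ?_)
  calc ∫ v', Ω v v' i j * (f v * f v') * pd (fun w => pd ψ j w) i v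
      = ∫ v', (pd (fun w => pd ψ j w) i v * f v) * Afun Ω f i j (v, v') :=
        integral_congr_ae (.of_forall fun v' => by simp only [Afun]; ring)
    _ = (pd (fun w => pd ψ j w) i v * f v) * Aint Ω f i j v := integral_const_mul _ _
    _ = (pd (fun w => pd ψ i w) j v * Aint Ω f i j v) * f v := by
        rw [← pd_pd_comm ψ hψ i j v]; ring

lemma group2_eq (i j : Fin 3) :
    (∫ v, ∫ v', (pd (fun w => Ω w v' i j) j v - pd (fun w => Ω v w i j) j v') *
        (f v * f v') * pd ψ i v) =
      ∫ v, (pd ψ i v * A'int Ω f i j v - pd ψ i v * Bint Ω f i j v) * f v := by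
  refine integral_congr_ae (.of_forall fun v => ?_)
  have hintA : Integrable (fun v' => A'fun Ω f i j (v, v')) :=
    param_integrable hfc _ (contDiff_A'fun Ω hΩ f hf i j).continuous
      (fun p hp => A'fun_zero Ω f i j hp) v
  have hintB : Integrable (fun v' => Bfun Ω f i j (v, v')) :=
    param_integrable hfc _ (contDiff_Bfun Ω hΩ f hf i j).continuous
      (fun p hp => Bfun_zero Ω f i j hp) v
  calc ∫ v', (pd (fun w => Ω w v' i j) j v - pd (fun w => Ω v w i j) j v') *
        (f v * f v') * pd ψ i v
      = ∫ v', (pd ψ i v * f v) * (A'fun Ω f i j (v, v') - Bfun Ω f i j (v, v')) := by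
        refine integral_congr_ae (.of_forall fun v' => ?_)
        show (pd (fun w => Ω w v' i j) j v - pd (fun w => Ω v w i j) j v') *
          (f v * f v') * pd ψ i v =
          pd ψ i v * f v * (A'fun Ω f i j (v, v') - Bfun Ω f i j (v, v'))
        have h1 := congrFun (cont_pdQ_fst Ω hΩ f hf i j v') v
        have h2 := congrFun (cont_pdQ_snd Ω hΩ f hf i j v) v'
        rw [show pd (fun w => Ω w v' i j) j v =
            fderiv ℝ (fun w => Ω w v' i j) v (EuclideanSpace.single j 1) from rfl,
          show pd (fun w => Ω v w i j) j v' =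
            fderiv ℝ (fun w => Ω v w i j) v' (EuclideanSpace.single j 1) from rfl, h1, h2]
        simp only [A'fun, Bfun]
        ring
    _ = (pd ψ i v * f v) * ∫ v', (A'fun Ω f i j (v, v') - Bfun Ω f i j (v, v')) :=
        integral_const_mul _ _
    _ = (pd ψ i v * A'int Ω f i j v - pd ψ i v * Bint Ω f i j v) * f v := by
        rw [integral_sub hintA hintB]
        show pd ψ i v * f v * (A'int Ω f i j v - Bint Ω f i j v) = _
        ring

lemma middle_eq (i : Fin 3) :
    -∫ v, pd ψ i v * Ifun Ω f i v =
      ∑ j : Fin 3, ((∫ v, (pd (fun w => pd ψ i w) j v * Aint Ω f i j v) * f v) +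
        ∫ v, (pd ψ i v * A'int Ω f i j v - pd ψ i v * Bint Ω f i j v) * f v) := by
  have hS : IsCompact (tsupport f) := hfc
  have hpdψ : Continuous (fun v => pd ψ i v) := (contDiff_pd ψ hψ i).continuous
  have hJ1 : ∀ j, Integrable (fun v => (pd ψ i v * Aint Ω f i j v) * pd f j v) := fun j =>
    int_helper hS (hpdψ.mul (Aint_cont Ω hΩ f hf hfc i j)) (contDiff_pd f hf j).continuous
      (fun w hw => pd_zero_of_not_mem f j hw)
  have hJ2 : ∀ j, Integrable (fun v => (pd ψ i v * Bint Ω f i j v) * f v) := fun j =>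
    int_helper hS (hpdψ.mul (Bint_cont Ω hΩ f hf hfc i j)) hf.continuous
      (fun w hw => image_zero_of_not_mem f hw)
  have hX : ∀ j, Integrable (fun v => (pd (fun w => pd ψ i w) j v * Aint Ω f i j v) * f v) :=
    fun j => int_helper hS ((contDiff_pd _ (contDiff_pd ψ hψ i) j).continuous.mul
      (Aint_cont Ω hΩ f hf hfc i j)) hf.continuous (fun w hw => image_zero_of_not_mem f hw)
  have hY : ∀ j, Integrable (fun v => (pd ψ i v * A'int Ω f i j v) * f v) := fun j =>
    int_helper hS (hpdψ.mul (A'int_cont Ω hΩ f hf hfc i j)) hf.continuous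
      (fun w hw => image_zero_of_not_mem f hw)
  have h1 : (fun v => pd ψ i v * Ifun Ω f i v) = fun v =>
      ∑ j : Fin 3, ((pd ψ i v * Aint Ω f i j v) * pd f j v +
        (pd ψ i v * Bint Ω f i j v) * f v) := by
    funext v
    rw [Ifun_eq Ω hΩ f hf hfc i v, Finset.mul_sum]
    exact Finset.sum_congr rfl fun j _ => by ring
  have hsum : ∀ j ∈ Finset.univ, Integrable (fun v =>
      (pd ψ i v * Aint Ω f i j v) * pd f j v + (pd ψ i v * Bint Ω f i j v) * f v) :=
    fun j _ => (hJ1 j).add (hJ2 j)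
  rw [h1, integral_finset_sum _ hsum, ← Finset.sum_neg_distrib]
  refine Finset.sum_congr rfl fun j _ => ?_
  rw [integral_add (hJ1 j) (hJ2 j)]
  have hsplit : ∫ v, (pd (fun w => pd ψ i w) j v * Aint Ω f i j v +
      pd ψ i v * A'int Ω f i j v) * f v =
      (∫ v, (pd (fun w => pd ψ i w) j v * Aint Ω f i j v) * f v) +
        ∫ v, (pd ψ i v * A'int Ω f i j v) * f v := by
    rw [← integral_add (hX j) (hY j)]
    exact integral_congr_ae (.of_forall fun v => by ring)
  have e1 := ibp2 Ω hΩ f hf hfc ψ hψ i j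
  rw [hsplit] at e1
  have hsub : ∫ v, (pd ψ i v * A'int Ω f i j v - pd ψ i v * Bint Ω f i j v) * f v =
      (∫ v, (pd ψ i v * A'int Ω f i j v) * f v) -
        ∫ v, (pd ψ i v * Bint Ω f i j v) * f v := by
    rw [← integral_sub (hY j) (hJ2 j)]
    exact integral_congr_ae (.of_forall fun v => by ring)
  rw [hsub]
  linarith [e1]

theorem weak_form_double_integration_by_parts'
    (hfcc : HasCompactSupport f) :
    ∫ v, ψ v * collOp Ω f v =
      (∑ i : Fin 3, ∑ j : Fin 3, ∫ v, ∫ v',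
        Ω v v' i j * (f v * f v') * pd (fun w => pd ψ j w) i v) +
      ∑ i : Fin 3, ∑ j : Fin 3, ∫ v, ∫ v',
        (pd (fun w => Ω w v' i j) j v - pd (fun w => Ω v w i j) j v') *
          (f v * f v') * pd ψ i v := by
  have hS : IsCompact (tsupport f) := hfc
  have step0 : (fun v => ψ v * collOp Ω f v) =
      fun v => ∑ i : Fin 3, ψ v * pd (Ifun Ω f i) i v := by
    funext v
    rw [collOp_eq Ω hΩ f hf hfc v, Finset.mul_sum]
    rfl
  calc ∫ v, ψ v * collOp Ω f v
      = ∑ i : Fin 3, ∫ v, ψ v * pd (Ifun Ω f i) i v := by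
        rw [step0]
        exact integral_finset_sum _ (fun i _ => int_helper hS hψ.continuous
          (pd_Ifun_cont Ω hΩ f hf hfc i) (fun w hw => pd_Ifun_zero Ω hΩ f hf hfc i hw))
    _ = ∑ i : Fin 3, ∑ j : Fin 3,
        ((∫ v, (pd (fun w => pd ψ i w) j v * Aint Ω f i j v) * f v) +
          ∫ v, (pd ψ i v * A'int Ω f i j v - pd ψ i v * Bint Ω f i j v) * f v) := by
        refine Finset.sum_congr rfl fun i _ => ?_
        rw [ibp1 Ω hΩ f hf hfc ψ hψ i, middle_eq Ω hΩ f hf hfc ψ hψ i]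
    _ = _ := by
        simp only [Finset.sum_add_distrib]
        congr 1
        · exact Finset.sum_congr rfl fun i _ => Finset.sum_congr rfl fun j _ =>
            (group1_eq Ω hΩ f hf hfc ψ hψ i j).symm
        · exact Finset.sum_congr rfl fun i _ => Finset.sum_congr rfl fun j _ =>
            (group2_eq Ω hΩ f hf hfc ψ hψ i j).symm

end H

/-- double integration-by-parts representation of the weak form of
the collision operator. -/
theorem weak_form_double_integration_by_parts
    (Ω : E3 → E3 → Matrix (Fin 3) (Fin 3) ℝ)
    (hΩ : ∀ i j, ContDiff ℝ ∞ fun p : E3 × E3 => Ω p.1 p.2 i j)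
    (f : E3 → ℝ) (hf : ContDiff ℝ ∞ f) (hfc : HasCompactSupport f)
    (ψ : E3 → ℝ) (hψ : ContDiff ℝ ∞ ψ) :
    ∫ v, ψ v * collOp Ω f v =
      (∑ i : Fin 3, ∑ j : Fin 3, ∫ v, ∫ v',
        Ω v v' i j * (f v * f v') * pd (fun w => pd ψ j w) i v) +
      ∑ i : Fin 3, ∑ j : Fin 3, ∫ v, ∫ v',
        (pd (fun w => Ω w v' i j) j v - pd (fun w => Ω v w i j) j v') *
          (f v * f v') * pd ψ i v :=
  weak_form_double_integration_by_parts' Ω hΩ f hf hfc ψ hψ hfc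
end
end
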